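/- Suppose sequences of matrices satisfy the identity A S_k - S_k A* = i Π_k j Π_k*, together with the recursions Π_{k+1} = Π_k + i A^{-1} Π_k j and S_{k+1} = S_k + A^{-1} S_k (A*)^{-1} + A^{-1} Π_k Π_k* (A*)^{-1}. Then A S_{k+1} - S_{k+1} A* = i Π_{k+1} j Π_{k+1}*. -/
import Mathlib


open Matrix

theorem stmt3 (n p : ℕ) (hn : 1 ≤ n) (hp : 1 ≤ p)
    (A S : Matrix (Fin n) (Fin n) ℂ)
    (Pi : Matrix (Fin n) (Fin p ⊕ Fin p) ℂ)
    (j : Matrix (Fin p ⊕ Fin p) (Fin p ⊕ Fin p) ℂ)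
    (hj : j = Matrix.fromBlocks 1 0 0 (-1))
    (hA : IsUnit A.det) (hS : S.IsHermitian)
    (hid : A * S - S * Aᴴ = Complex.I • (Pi * j * Piᴴ))
    (Pi' : Matrix (Fin n) (Fin p ⊕ Fin p) ℂ)
    (S' : Matrix (Fin n) (Fin n) ℂ)
    (hPi' : Pi' = Pi + Complex.I • (A⁻¹ * Pi * j))
    (hS' : S' = S + A⁻¹ * S * (Aᴴ)⁻¹ + A⁻¹ * Pi * Piᴴ * (Aᴴ)⁻¹) :
    A * S' - S' * Aᴴ = Complex.I • (Pi' * j * Pi'ᴴ) := by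
  have hA1 : A * A⁻¹ = 1 := Matrix.mul_nonsing_inv A hA
  have hA2 : A⁻¹ * A = 1 := Matrix.nonsing_inv_mul A hA
  have hAH : IsUnit Aᴴ.det := by
    rw [Matrix.det_conjTranspose]; exact hA.star
  have hAH1 : Aᴴ * Aᴴ⁻¹ = 1 := Matrix.mul_nonsing_inv _ hAH
  have hAH2 : Aᴴ⁻¹ * Aᴴ = 1 := Matrix.nonsing_inv_mul _ hAH
  have hjH : jᴴ = j := by
    subst hj
    simp [Matrix.fromBlocks_conjTranspose]
  have hjj : j * j = 1 := by
    subst hj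
    simp [Matrix.fromBlocks_multiply, ← Matrix.fromBlocks_one]
  have hAinvH : (A⁻¹)ᴴ = Aᴴ⁻¹ := (Matrix.conjTranspose_nonsing_inv A).symm ▸ rfl
  -- derived identity
  have key : S * Aᴴ⁻¹ - A⁻¹ * S = Complex.I • (A⁻¹ * (Pi * j * Piᴴ) * Aᴴ⁻¹) := by
    have := congrArg (fun M => A⁻¹ * M * Aᴴ⁻¹) hid
    simp only [Matrix.sub_mul, Matrix.mul_sub, Matrix.smul_mul, Matrix.mul_smul] at this
    calc S * Aᴴ⁻¹ - A⁻¹ * S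
        = A⁻¹ * (A * S) * Aᴴ⁻¹ - A⁻¹ * (S * Aᴴ) * Aᴴ⁻¹ := by
          rw [← Matrix.mul_assoc A⁻¹ A S, hA2, Matrix.one_mul,
            Matrix.mul_assoc A⁻¹ (S * Aᴴ) _, Matrix.mul_assoc S Aᴴ _, hAH1, Matrix.mul_one]
      _ = Complex.I • (A⁻¹ * (Pi * j * Piᴴ) * Aᴴ⁻¹) := this
  -- expand RHS
  have hPiH : Pi'ᴴ = Piᴴ + (-Complex.I) • (j * (Piᴴ * Aᴴ⁻¹)) := by
    subst hPi'
    simp [Matrix.conjTranspose_smul, hjH, hAinvH, Complex.star_def, Complex.conj_I,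
      Matrix.mul_assoc]
  have hrhs : Complex.I • (Pi' * j * Pi'ᴴ)
      = Complex.I • (Pi * j * Piᴴ) + Pi * Piᴴ * Aᴴ⁻¹ - A⁻¹ * (Pi * Piᴴ)
        + Complex.I • (A⁻¹ * (Pi * j * Piᴴ) * Aᴴ⁻¹) := by
    rw [hPiH, hPi']
    simp only [Matrix.add_mul, Matrix.mul_add, Matrix.smul_mul, Matrix.mul_smul,
      smul_smul, smul_add]
    have s1 : (Complex.I * -Complex.I : ℂ) = 1 := by
      rw [mul_neg, Complex.I_mul_I, neg_neg]
    have s2 : (Complex.I * (-Complex.I * Complex.I) : ℂ) = Complex.I := by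
      rw [neg_mul, Complex.I_mul_I, neg_neg, mul_one]
    rw [s1, s2, one_smul]
    have e1 : Pi * j * (j * (Piᴴ * Aᴴ⁻¹)) = Pi * Piᴴ * Aᴴ⁻¹ := by
      rw [Matrix.mul_assoc Pi j, ← Matrix.mul_assoc j j, hjj, Matrix.one_mul,
        ← Matrix.mul_assoc]
    have e2 : A⁻¹ * Pi * j * j * Piᴴ = A⁻¹ * (Pi * Piᴴ) := by
      rw [Matrix.mul_assoc (A⁻¹ * Pi) j j, hjj, Matrix.mul_one, Matrix.mul_assoc]
    have e3 : A⁻¹ * Pi * j * j * (j * (Piᴴ * Aᴴ⁻¹)) = A⁻¹ * (Pi * j * Piᴴ) * Aᴴ⁻¹ := by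
      rw [Matrix.mul_assoc (A⁻¹ * Pi) j j, hjj, Matrix.mul_one]
      simp only [Matrix.mul_assoc]
    rw [e1, e2, e3]
    rw [Complex.I_mul_I, neg_one_smul]
    abel
  rw [hrhs, hS']
  simp only [Matrix.mul_add, Matrix.add_mul]
  rw [show A * (A⁻¹ * S * Aᴴ⁻¹) = S * Aᴴ⁻¹ by
        rw [← Matrix.mul_assoc, ← Matrix.mul_assoc, hA1, Matrix.one_mul],
      show A⁻¹ * S * Aᴴ⁻¹ * Aᴴ = A⁻¹ * S by
        rw [Matrix.mul_assoc, hAH2, Matrix.mul_one],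
      show A * (A⁻¹ * Pi * Piᴴ * Aᴴ⁻¹) = Pi * Piᴴ * Aᴴ⁻¹ by
        rw [show A⁻¹ * Pi * Piᴴ * Aᴴ⁻¹ = A⁻¹ * (Pi * Piᴴ * Aᴴ⁻¹) by
          simp only [Matrix.mul_assoc], ← Matrix.mul_assoc, hA1, Matrix.one_mul],
      show A⁻¹ * Pi * Piᴴ * Aᴴ⁻¹ * Aᴴ = A⁻¹ * (Pi * Piᴴ) by
        rw [Matrix.mul_assoc, hAH2, Matrix.mul_one, Matrix.mul_assoc]]
  rw [← hid, ← key]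
  abel
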